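/- (Half-argument Landen transformation, sn-component.) Let k ∈ ℂ, let (S, C, D) be a Jacobi triple with modulus k, let ε ∈ {1, −1}, and let β ∈ ℂ with β² = 1 − k and εβ + 1 ≠ 0. Define g(z) = (ε + β)·C(2z/(εβ + 1)) / (β − D(2z/(εβ + 1))) on the open set U = { z ∈ ℂ : β − D(2z/(εβ + 1)) ≠ 0 }. Then g is differentiable on U and for every z ∈ U, g′(z)² = (1 − g(z)²)·(1 − m·g(z)²), where m = ((1 − εβ)/(1 + εβ))². (This says that g agrees, up to a phase shift, with sn(· | m); cf. sn(½(ε√(1−k)+1)x + φ | m) = (ε+√(1−k))·cn(x|k)/(√(1−k) − dn(x|k)).) -/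

import Mathlib

/-- A Jacobi triple with modulus `k`: the model is `(sn(·|k), cn(·|k), dn(·|k))`. -/
def IsJacobiTriple (k : ℂ) (S C D : ℂ → ℂ) : Prop :=
  ∀ z : ℂ, HasDerivAt S (C z * D z) z ∧ HasDerivAt C (-(S z * D z)) z ∧
    HasDerivAt D (-(k * S z * C z)) z ∧
    S z ^ 2 + C z ^ 2 = 1 ∧ D z ^ 2 + k * S z ^ 2 = 1

/-- A triple `(St, Ct, Dt)` satisfies system (1) with modulus `m` on `U`:
at every point of `U` the functions are differentiable with `St′ = Ct·Dt`,
and `St² + Ct² = 1` and `Dt² + m·St² = 1` hold on `U`. -/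
def SatisfiesSystem1 (m : ℂ) (St Ct Dt : ℂ → ℂ) (U : Set ℂ) : Prop :=
  ∀ z ∈ U, HasDerivAt St (Ct z * Dt z) z ∧
    DifferentiableAt ℂ Ct z ∧ DifferentiableAt ℂ Dt z ∧
    St z ^ 2 + Ct z ^ 2 = 1 ∧ Dt z ^ 2 + m * St z ^ 2 = 1

lemma key_alg (e b c d s kk : ℂ) (he : e ^ 2 = 1) (hb : b ^ 2 = 1 - kk)
    (h1 : s ^ 2 + c ^ 2 = 1) (h2 : d ^ 2 + kk * s ^ 2 = 1) :
    ((b - d) ^ 2 - (e + b) ^ 2 * c ^ 2) *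
      ((1 + e * b) ^ 2 * (b - d) ^ 2 - (1 - e * b) ^ 2 * (e + b) ^ 2 * c ^ 2)
      = 4 * b ^ 2 * (e + b) ^ 2 * s ^ 2 * (b - d) ^ 2 := by
  have id1 : (b - d) ^ 2 - (e + b) ^ 2 * c ^ 2
      = -2 * b * ((d + e) - (b + e) * s ^ 2) := by
    linear_combination ((-1) * c^2) * he + ((1) * 1 + (-2) * s^2 + (-1) * c^2) * hb +
      ((-2) * 1 + (1) * kk + (-2) * e*b) * h1 + ((1) * 1) * h2
  have id2 : (1 + e * b) ^ 2 * (b - d) ^ 2 - (1 - e * b) ^ 2 * (e + b) ^ 2 * c ^ 2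
      = 2 * b * ((e + b) ^ 2 * (e - d) - kk * (b + e) * s ^ 2) := by
    linear_combination ((-1) * 1 + (1) * kk + (1) * s^2 + (-1) * s^2*kk + (-1) * c^2 +
      (2) * b*d + (-4) * b^2 + (1) * b^2*d^2 + (4) * b^2*c^2 + (-2) * b^3*d + (1) * b^4 +
      (-1) * b^4*c^2 + (-2) * e*b + (2) * e*b*c^2 + (-2) * e*b^3*c^2 + (-1) * e^2*b^2*c^2) * he +
      ((-3) * 1 + (1) * s^2 + (1) * s^2*kk + (1) * d^2 + (3) * c^2 + (1) * b^2 +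
      (-1) * b^2*c^2 + (-1) * e^2*c^2) * hb +
      ((2) * 1 + (-3) * kk + (-1) * b^2 + (1) * b^2*kk + (-1) * e^2 + (1) * e^2*kk) * h1 +
      ((2) * 1 + (-1) * kk + (2) * e*b) * h2
  have id3 : ((d + e) - (b + e) * s ^ 2) * ((e + b) ^ 2 * (e - d) - kk * (b + e) * s ^ 2)
      = -((e + b) ^ 2 * s ^ 2 * (b - d) ^ 2) := by
    linear_combination ((1) * 1 + (-1) * s^2 + (-1) * s^2*kk + (1) * s^4*kk + (-1) * d^2 +
      (1) * d^2*s^2 + (1) * b*d*s^2 + (1) * b^2 + (-2) * b^2*s^2 + (1) * e*d*s^2 +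
      (2) * e*b + (-3) * e*b*s^2 + (1) * e^2 + (-1) * e^2*s^2) * he +
      ((1) * 1 + (-1) * s^2 + (-1) * s^2*kk + (1) * s^4*kk + (-1) * d^2 + (1) * d^2*s^2 +
      (-1) * b*d*s^2 + (1) * b^2*s^2 + (-1) * e*d*s^2 + (1) * e*b*s^2) * hb +
      ((-2) * 1 + (1) * kk + (2) * s^2 + (-1) * s^2*kk + (-2) * e*b + (2) * e*b*s^2) * h2
  rw [id1, id2]
  linear_combination (-4 * b ^ 2) * id3

theorem stmt_9 (k : ℂ) (S C D : ℂ → ℂ) (hJ : IsJacobiTriple k S C D)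
    (ε : ℂ) (hε : ε = 1 ∨ ε = -1)
    (β : ℂ) (hβ : β ^ 2 = 1 - k) (hβ1 : ε * β + 1 ≠ 0)
    (g : ℂ → ℂ)
    (hg : g = fun z => (ε + β) * C (2 * z / (ε * β + 1)) /
      (β - D (2 * z / (ε * β + 1)))) :
    (∀ z ∈ {z : ℂ | β - D (2 * z / (ε * β + 1)) ≠ 0}, DifferentiableAt ℂ g z) ∧
    ∀ z ∈ {z : ℂ | β - D (2 * z / (ε * β + 1)) ≠ 0},
      (deriv g z) ^ 2 =
        (1 - g z ^ 2) * (1 - ((1 - ε * β) / (1 + ε * β)) ^ 2 * g z ^ 2) := by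
  have hε2 : ε ^ 2 = 1 := by rcases hε with h | h <;> simp [h]
  have key : ∀ z ∈ {z : ℂ | β - D (2 * z / (ε * β + 1)) ≠ 0},
      HasDerivAt g (2 * β * (ε + β) / (ε * β + 1) *
        S (2 * z / (ε * β + 1)) / (β - D (2 * z / (ε * β + 1)))) z := by
    intro z hz
    simp only [Set.mem_setOf_eq] at hz
    set w : ℂ := 2 * z / (ε * β + 1) with hw
    obtain ⟨hS, hC, hD, hS2, hD2⟩ := hJ w
    have hlin : HasDerivAt (fun z : ℂ => 2 * z / (ε * β + 1)) (2 / (ε * β + 1)) z := by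
      simpa using ((hasDerivAt_id z).const_mul (2 : ℂ)).div_const (ε * β + 1)
    have hCz : HasDerivAt (fun z : ℂ => C (2 * z / (ε * β + 1)))
        (-(S w * D w) * (2 / (ε * β + 1))) z := hC.comp z hlin
    have hDz : HasDerivAt (fun z : ℂ => D (2 * z / (ε * β + 1)))
        (-(k * S w * C w) * (2 / (ε * β + 1))) z := hD.comp z hlin
    have hNum : HasDerivAt (fun z : ℂ => (ε + β) * C (2 * z / (ε * β + 1)))
        ((ε + β) * (-(S w * D w) * (2 / (ε * β + 1)))) z := hCz.const_mul _
    have hDen : HasDerivAt (fun z : ℂ => β - D (2 * z / (ε * β + 1)))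
        (0 - -(k * S w * C w) * (2 / (ε * β + 1))) z :=
      (hasDerivAt_const z β).sub hDz
    have hdiv := hNum.div hDen hz
    rw [hg]
    refine HasDerivAt.congr_deriv hdiv ?_
    symm
    simp only [← hw]
    clear_value w
    rw [div_eq_div_iff hz (pow_ne_zero 2 hz)]
    linear_combination (2 * (ε + β) / (ε * β + 1) * (β - D w) * S w) * (hβ - hD2 + k * hS2)
  refine ⟨fun z hz => (key z hz).differentiableAt, fun z hz => ?_⟩
  have hz' : β - D (2 * z / (ε * β + 1)) ≠ 0 := hz
  rw [(key z hz).deriv, hg]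
  set w : ℂ := 2 * z / (ε * β + 1) with hw
  obtain ⟨hS, hC, hD, hS2, hD2⟩ := hJ w
  have h1 : (1 : ℂ) + ε * β ≠ 0 := by rwa [add_comm]
  have halg := key_alg ε β (C w) (D w) (S w) k hε2 hβ hS2 hD2
  simp only [← hw]
  clear_value w
  field_simp
  have hu : (β * ε + 1) * (β * ε + 1)⁻¹ = 1 := mul_inv_cancel₀ (by rw [mul_comm β ε]; exact hβ1)
  simp only [div_eq_mul_inv, ← inv_pow]
  linear_combination (-((β * ε + 1)⁻¹) ^ 2) * halg +
    (((β - D w) ^ 2 - (ε + β) ^ 2 * C w ^ 2) * (β - D w) ^ 2 * ((β * ε + 1) * (β * ε + 1)⁻¹ + 1)) * hu
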